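/- arXiv:1602.08380 — 2 statements merged into one kernel-verified Lean document; each statement's English description precedes it below -/
import Mathlib

section
/- Let (X, f_{1,∞}) be a nonautonomous discrete dynamical system such that the sequence (f_n)_{n∈ℕ} converges uniformly to a function φ : X → X, and let p be a free ultrafilter on ℕ. Then the map Ψ_p : E(X, φ) → X^X defined by Ψ_p(g) = g ∘ f_1^p (equivalently, Ψ_p(φ^q) = f_1^{p+q} for q ∈ β(ℕ)) is well-defined, continuous, and maps E(X, φ) onto E_p(X, f_{1,∞}) := {f_1^{p+q} : q ∈ β(ℕ)}; in particular E_p(X, f_{1,∞}) is a continuous image of E(X, φ). -/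
open Filter Topology

/-- The `n`-th iterate `f_1^n = f_n ∘ ⋯ ∘ f_1` (maps indexed from `1`; `f 0` unused). -/
def iterSeq {X : Type*} (f : ℕ → X → X) : ℕ → X → X
  | 0 => id
  | n + 1 => f (n + 1) ∘ iterSeq f n

/-- The `p`-limit of a sequence `u` with respect to an ultrafilter `p` on `ℕ`. -/
noncomputable def pLim {X : Type*} [TopologicalSpace X] (p : Ultrafilter ℕ) (u : ℕ → X) : X :=
  letI : Nonempty X := ⟨u 0⟩
  limUnder (p : Filter ℕ) u

/-- `f_1^p(x) = p-lim_n f_1^n(x)`. -/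
noncomputable def pIter {X : Type*} [TopologicalSpace X] (f : ℕ → X → X)
    (p : Ultrafilter ℕ) : X → X :=
  fun x => pLim p fun n => iterSeq f n x

/-- `φ^q(x) = q-lim_n φ^n(x)` for a single map `φ : X → X`. -/
noncomputable def pIterMap {X : Type*} [TopologicalSpace X] (φ : X → X)
    (q : Ultrafilter ℕ) : X → X :=
  fun x => pLim q fun n => φ^[n] x

/-- The sum of two ultrafilters on `ℕ`: `A ∈ p + q` iff `{n : {m : m + n ∈ A} ∈ p} ∈ q`. -/
def uAdd (p q : Ultrafilter ℕ) : Ultrafilter ℕ :=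
  q.bind fun n => p.map fun m => m + n

lemma tendsto_pLim {X : Type*} [TopologicalSpace X] [CompactSpace X] [T2Space X]
    (p : Ultrafilter ℕ) (u : ℕ → X) : Tendsto u p (𝓝 (pLim p u)) := by
  letI : Nonempty X := ⟨u 0⟩
  obtain ⟨y, -, hy⟩ := isCompact_univ.ultrafilter_le_nhds (p.map u)
    (by simp [Filter.le_principal_iff])
  have ht : Tendsto u (p : Filter ℕ) (𝓝 y) := hy
  rw [pLim, ht.limUnder_eq]
  exact ht

lemma key_shift {X : Type*} [MetricSpace X] (f : ℕ → X → X)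
    (φ : X → X) (hφ : Continuous φ)
    (hconv : TendstoUniformly (fun n x => f n x) φ atTop)
    (p : Ultrafilter ℕ)
    (y : ℕ → X) (y₀ : X) (hy : Tendsto y p (𝓝 y₀))
    (g : ℕ → ℕ) (hg : Tendsto g (p : Filter ℕ) atTop) :
    Tendsto (fun m => f (g m) (y m)) p (𝓝 (φ y₀)) := by
  rw [Metric.tendsto_nhds]
  intro ε hε
  have h1 : ∀ᶠ k in atTop, ∀ z, dist (φ z) (f k z) < ε/2 :=
    Metric.tendstoUniformly_iff.mp hconv (ε/2) (by linarith)
  have h2 : ∀ᶠ m in (p : Filter ℕ), ∀ z, dist (φ z) (f (g m) z) < ε/2 := hg.eventually h1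
  have h3 : ∀ᶠ m in (p : Filter ℕ), dist (φ (y m)) (φ y₀) < ε/2 :=
    Metric.tendsto_nhds.mp (hφ.continuousAt.tendsto.comp hy) (ε/2) (by linarith)
  filter_upwards [h2, h3] with m hm2 hm3
  have := hm2 (y m)
  rw [dist_comm] at this
  calc dist (f (g m) (y m)) (φ y₀)
      ≤ dist (f (g m) (y m)) (φ (y m)) + dist (φ (y m)) (φ y₀) := dist_triangle _ _ _
    _ < ε/2 + ε/2 := add_lt_add this hm3
    _ = ε := by ring

lemma iter_shift {X : Type*} [MetricSpace X] [CompactSpace X] (f : ℕ → X → X)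
    (φ : X → X) (hφ : Continuous φ)
    (hconv : TendstoUniformly (fun n x => f n x) φ atTop)
    (p : Ultrafilter ℕ) (hp : (p : Filter ℕ) ≤ Filter.cofinite)
    (x : X) (n : ℕ) :
    Tendsto (fun m => iterSeq f (m + n) x) p (𝓝 (φ^[n] (pIter f p x))) := by
  have hp' : Tendsto (fun m : ℕ => m) (p : Filter ℕ) atTop := by
    rw [← Nat.cofinite_eq_atTop]; exact tendsto_id'.mpr hp
  induction n with
  | zero => simpa [pIter] using tendsto_pLim p (fun m => iterSeq f m x)
  | succ n ih =>
    have heq : (fun m => iterSeq f (m + (n+1)) x)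
        = fun m => f (m + n + 1) (iterSeq f (m + n) x) := by
      funext m
      show iterSeq f ((m + n) + 1) x = _
      rfl
    rw [heq, Function.iterate_succ_apply']
    have hg : Tendsto (fun m => m + n + 1) (p : Filter ℕ) atTop := by
      exact tendsto_atTop_mono (fun m => by omega) hp'
    exact key_shift f φ hφ hconv p (fun m => iterSeq f (m + n) x)
      (φ^[n] (pIter f p x)) ih (fun m => m + n + 1) hg

lemma pIter_uAdd {X : Type*} [MetricSpace X] [CompactSpace X] (f : ℕ → X → X)
    (φ : X → X) (hφ : Continuous φ)
    (hconv : TendstoUniformly (fun n x => f n x) φ atTop)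
    (p : Ultrafilter ℕ) (hp : (p : Filter ℕ) ≤ Filter.cofinite)
    (q : Ultrafilter ℕ) (x : X) :
    pIterMap φ q (pIter f p x) = pIter f (uAdd p q) x := by
  letI : Nonempty X := ⟨x⟩
  set L := pIter f p x with hL
  set M := pIterMap φ q L with hM
  have hMq : Tendsto (fun n => φ^[n] L) q (𝓝 M) := tendsto_pLim q _
  have key : Tendsto (fun k => iterSeq f k x) ((uAdd p q : Ultrafilter ℕ) : Filter ℕ) (𝓝 M) := by
    intro s hs
    obtain ⟨t, hts, ht_open, hMt⟩ := mem_nhds_iff.mp hs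
    have hq : {n | φ^[n] L ∈ t} ∈ q := hMq (ht_open.mem_nhds hMt)
    have hmem : {k | iterSeq f k x ∈ t} ∈ ((uAdd p q : Ultrafilter ℕ) : Filter ℕ) := by
      have hcoe : ((uAdd p q : Ultrafilter ℕ) : Filter ℕ)
          = Filter.bind (q : Filter ℕ) fun n => Filter.map (fun m => m + n) (p : Filter ℕ) := rfl
      rw [hcoe, Filter.mem_bind']
      refine Filter.mem_of_superset hq fun n hn => ?_
      simp only [Set.mem_setOf_eq, Filter.mem_map]
      exact (iter_shift f φ hφ hconv p hp x n) (ht_open.mem_nhds hn)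
    exact Filter.mem_of_superset hmem fun k hk => hts hk
  have : pIter f (uAdd p q) x = M := by
    show pLim (uAdd p q) (fun k => iterSeq f k x) = M
    rw [pLim]
    exact key.limUnder_eq
  rw [this]

lemma closure_iterates {X : Type*} [MetricSpace X] [CompactSpace X] (φ : X → X) :
    closure {h : X → X | ∃ n : ℕ, h = φ^[n]}
      = {h : X → X | ∃ q : Ultrafilter ℕ, h = pIterMap φ q} := by
  ext g
  constructor
  · intro hg
    have hne : (Filter.comap (fun n => φ^[n]) (𝓝 g)).NeBot := by
      rw [Filter.comap_neBot_iff]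
      intro t ht
      obtain ⟨h, hht, n, rfl⟩ := mem_closure_iff_nhds.mp hg t ht
      exact ⟨n, hht⟩
    set q : Ultrafilter ℕ := Ultrafilter.of (Filter.comap (fun n => φ^[n]) (𝓝 g)) with hqdef
    have hq : Tendsto (fun n => φ^[n]) (q : Filter ℕ) (𝓝 g) := by
      have := Ultrafilter.of_le (Filter.comap (fun n => φ^[n]) (𝓝 g))
      calc Filter.map (fun n => φ^[n]) (q : Filter ℕ)
          ≤ Filter.map (fun n => φ^[n]) (Filter.comap (fun n => φ^[n]) (𝓝 g)) :=
            Filter.map_mono this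
        _ ≤ 𝓝 g := Filter.map_comap_le
    refine ⟨q, funext fun x => ?_⟩
    have hx : Tendsto (fun n => φ^[n] x) (q : Filter ℕ) (𝓝 (g x)) :=
      tendsto_pi_nhds.mp hq x
    letI : Nonempty X := ⟨x⟩
    exact (hx.limUnder_eq).symm
  · rintro ⟨q, rfl⟩
    refine mem_closure_of_tendsto (b := (q : Filter ℕ)) (f := fun n => φ^[n]) ?_ ?_
    · rw [tendsto_pi_nhds]
      exact fun x => tendsto_pLim q _
    · exact Filter.Eventually.of_forall fun n => ⟨n, rfl⟩


/-- If `(f_n)` converges uniformly to `φ : X → X` and `p` is a free ultrafilter on `ℕ`, then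
the map `Ψ_p : E(X, φ) → X^X`, `Ψ_p(g) = g ∘ f_1^p` (equivalently `Ψ_p(φ^q) = f_1^{p+q}`)
is well-defined, continuous, and maps `E(X, φ)` onto
`E_p(X, f_{1,∞}) = {f_1^{p+q} : q ∈ β(ℕ)}`; in particular `E_p(X, f_{1,∞})` is a continuous
image of `E(X, φ)`. -/
theorem stmt16 {X : Type*} [MetricSpace X] [CompactSpace X]
    (f : ℕ → X → X) (hf : ∀ n, 1 ≤ n → Continuous (f n))
    (φ : X → X) (hconv : TendstoUniformly (fun n x => f n x) φ Filter.atTop)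
    (p : Ultrafilter ℕ) (hp : (p : Filter ℕ) ≤ Filter.cofinite) :
    Continuous (fun g : X → X => g ∘ pIter f p) ∧
    (∀ q : Ultrafilter ℕ, pIterMap φ q ∘ pIter f p = pIter f (uAdd p q)) ∧
    (fun g : X → X => g ∘ pIter f p) '' closure {h : X → X | ∃ n : ℕ, h = φ^[n]}
      = {h : X → X | ∃ q : Ultrafilter ℕ, h = pIter f (uAdd p q)} := by
  have hφ : Continuous φ := hconv.continuous (Filter.eventually_atTop.2 ⟨1, hf⟩).frequently
  have part2 : ∀ q : Ultrafilter ℕ, pIterMap φ q ∘ pIter f p = pIter f (uAdd p q) :=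
    fun q => funext fun x => pIter_uAdd f φ hφ hconv p hp q x
  refine ⟨continuous_pi fun x => continuous_apply (pIter f p x), part2, ?_⟩
  rw [closure_iterates]
  ext h
  simp only [Set.mem_image, Set.mem_setOf_eq]
  constructor
  · rintro ⟨g, ⟨q, rfl⟩, rfl⟩
    exact ⟨q, (part2 q)⟩
  · rintro ⟨q, rfl⟩
    exact ⟨pIterMap φ q, ⟨q, rfl⟩, part2 q⟩
end

section
/- Let (X, f_{1,∞}) be a nonautonomous discrete dynamical system such that the sequence (f_n)_{n∈ℕ} converges uniformly to a function φ : X → X. If p is a free idempotent ultrafilter on ℕ (i.e. p + p = p), then φ^p ∘ f_1^{q+p} = f_1^{q+p} for every free ultrafilter q on ℕ; that is, f_1^{q+p}(x) is a fixed point of φ^p for every free ultrafilter q and every x ∈ X. -/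
open Filter Topology

section A
variable {X : Type*} [MetricSpace X] [CompactSpace X]

lemma pLim_tendsto (p : Ultrafilter ℕ) (u : ℕ → X) :
    Tendsto u p (𝓝 (pLim p u)) := by
  haveI : Nonempty X := ⟨u 0⟩
  apply tendsto_nhds_limUnder
  obtain ⟨x, -, hx⟩ := isCompact_univ.ultrafilter_le_nhds (p.map u) (by simp)
  exact ⟨x, hx⟩

lemma pLim_eq {p : Ultrafilter ℕ} {u : ℕ → X} {a : X} (h : Tendsto u p (𝓝 a)) :
    pLim p u = a := by
  haveI : Nonempty X := ⟨a⟩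
  exact h.limUnder_eq

lemma mem_uAdd {p q : Ultrafilter ℕ} {s : Set ℕ} :
    s ∈ uAdd q p ↔ {n | {m | m + n ∈ s} ∈ q} ∈ p := by
  rfl

end A

section B
variable {X : Type*} [MetricSpace X] [CompactSpace X]

lemma pLim_comp {p : Ultrafilter ℕ} {u : ℕ → X} {g : X → X} (hg : Continuous g) :
    pLim p (fun n => g (u n)) = g (pLim p u) :=
  pLim_eq ((hg.tendsto _).comp (pLim_tendsto p u))

lemma pLim_uAdd (p q : Ultrafilter ℕ) (u : ℕ → X) :
    pLim (uAdd q p) u = pLim p (fun n => pLim q (fun m => u (m + n))) := by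
  set L := pLim p (fun n => pLim q (fun m => u (m + n))) with hL
  apply pLim_eq
  rw [Metric.tendsto_nhds]
  intro ε hε
  have h1 : ∀ᶠ n in (p : Filter ℕ),
      dist (pLim q (fun m => u (m + n))) L < ε / 2 := by
    have := pLim_tendsto p (fun n => pLim q (fun m => u (m + n)))
    rw [Metric.tendsto_nhds] at this
    exact this _ (by linarith)
  have key : {n | {m | dist (u (m + n)) L < ε} ∈ q} ∈ p := by
    filter_upwards [h1] with n hn
    have h2 := pLim_tendsto q (fun m => u (m + n))
    rw [Metric.tendsto_nhds] at h2
    filter_upwards [h2 _ (by linarith : (0:ℝ) < ε/2)] with m hm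
    calc dist (u (m + n)) L ≤ dist (u (m + n)) (pLim q (fun m => u (m + n)))
            + dist (pLim q (fun m => u (m + n))) L := dist_triangle _ _ _
      _ < ε / 2 + ε / 2 := add_lt_add hm hn
      _ = ε := by ring
  exact mem_uAdd.mpr key
end B

/-- `gComp f n m = f (m+n) ∘ ⋯ ∘ f (m+1)`. -/
def gComp {X : Type*} (f : ℕ → X → X) : ℕ → ℕ → X → X
  | 0, _ => id
  | n + 1, m => f (m + n + 1) ∘ gComp f n m

lemma iterSeq_add {X : Type*} (f : ℕ → X → X) (n m : ℕ) (x : X) :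
    iterSeq f (m + n) x = gComp f n m (iterSeq f m x) := by
  induction n with
  | zero => rfl
  | succ n ih =>
    show f (m + n + 1) (iterSeq f (m + n) x) = _
    rw [ih]; rfl

section C
variable {X : Type*} [MetricSpace X] [CompactSpace X]

lemma gComp_unif {f : ℕ → X → X} {φ : X → X} (hφ : Continuous φ)
    (hconv : TendstoUniformly (fun n x => f n x) φ Filter.atTop) (n : ℕ) :
    TendstoUniformly (fun m => gComp f n m) (φ^[n]) Filter.atTop := by
  induction n with
  | zero =>
    rw [Metric.tendstoUniformly_iff]
    intro ε hε
    exact Eventually.of_forall fun m x => by simpa [gComp] using hε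
  | succ n ih =>
    have hφu : UniformContinuous φ := CompactSpace.uniformContinuous_of_continuous hφ
    rw [Metric.tendstoUniformly_iff] at *
    intro ε hε
    obtain ⟨δ, hδ, hδ'⟩ := Metric.uniformContinuous_iff.mp hφu (ε/2) (by linarith)
    have h1 := hconv (ε/2) (by linarith)
    obtain ⟨N1, hN1⟩ := eventually_atTop.mp h1
    filter_upwards [ih δ hδ, eventually_ge_atTop N1] with m hm hmN x
    have hfy : dist (φ (gComp f n m x)) (f (m + n + 1) (gComp f n m x)) < ε/2 :=
      hN1 _ (by omega) _
    have h2 : dist (φ^[n] x) (gComp f n m x) < δ := hm x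
    have h3 : dist (φ (φ^[n] x)) (φ (gComp f n m x)) < ε/2 := hδ' h2
    show dist (φ^[n+1] x) (f (m + n + 1) (gComp f n m x)) < ε
    rw [Function.iterate_succ_apply']
    calc dist (φ (φ^[n] x)) (f (m + n + 1) (gComp f n m x))
        ≤ dist (φ (φ^[n] x)) (φ (gComp f n m x))
          + dist (φ (gComp f n m x)) (f (m + n + 1) (gComp f n m x)) := dist_triangle _ _ _
      _ < ε/2 + ε/2 := add_lt_add h3 hfy
      _ = ε := by ring

end C

section D
variable {X : Type*} [MetricSpace X] [CompactSpace X]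

/-- `q`-limit of shifted iterates: `q-lim_m f_1^{m+n}(x) = φ^[n] (f_1^q x)` for free `q`. -/
lemma shifted_pLim {f : ℕ → X → X} {φ : X → X} (hφ : Continuous φ)
    (hconv : TendstoUniformly (fun n x => f n x) φ Filter.atTop)
    {q : Ultrafilter ℕ} (hq : (q : Filter ℕ) ≤ Filter.cofinite) (n : ℕ) (x : X) :
    pLim q (fun m => iterSeq f (m + n) x) = φ^[n] (pIter f q x) := by
  have hqa : (q : Filter ℕ) ≤ Filter.atTop := by rwa [← Nat.cofinite_eq_atTop]
  apply pLim_eq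
  rw [Metric.tendsto_nhds]
  intro ε hε
  have hcont : Continuous (φ^[n]) := hφ.iterate n
  have h1 : ∀ᶠ m in (q : Filter ℕ),
      dist (φ^[n] (iterSeq f m x)) (φ^[n] (pIter f q x)) < ε/2 := by
    have := (hcont.tendsto _).comp (pLim_tendsto q (fun m => iterSeq f m x))
    rw [Metric.tendsto_nhds] at this
    exact this _ (by linarith)
  have h2 : ∀ᶠ m in (q : Filter ℕ),
      dist (φ^[n] (iterSeq f m x)) (gComp f n m (iterSeq f m x)) < ε/2 := by
    apply hqa
    have := Metric.tendstoUniformly_iff.mp (gComp_unif hφ hconv n) (ε/2) (by linarith)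
    filter_upwards [this] with m hm using hm _
  filter_upwards [h1, h2] with m hm1 hm2
  rw [iterSeq_add]
  calc dist (gComp f n m (iterSeq f m x)) (φ^[n] (pIter f q x))
      ≤ dist (gComp f n m (iterSeq f m x)) (φ^[n] (iterSeq f m x))
        + dist (φ^[n] (iterSeq f m x)) (φ^[n] (pIter f q x)) := dist_triangle _ _ _
    _ < ε/2 + ε/2 := add_lt_add (by rw [dist_comm]; exact hm2) hm1
    _ = ε := by ring

/-- `φ^p (φ^q y) = φ^{q+p} y` for continuous `φ`. -/
lemma pIterMap_uAdd {φ : X → X} (hφ : Continuous φ) (p q : Ultrafilter ℕ) (y : X) :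
    pIterMap φ (uAdd q p) y = pIterMap φ p (pIterMap φ q y) := by
  show pLim (uAdd q p) (fun k => φ^[k] y) = _
  rw [pLim_uAdd]
  have h : ∀ n, pLim q (fun m => φ^[m + n] y) = φ^[n] (pIterMap φ q y) := by
    intro n
    have : (fun m => φ^[m + n] y) = fun m => φ^[n] (φ^[m] y) := by
      funext m; rw [add_comm, Function.iterate_add_apply]
    rw [this, pLim_comp (hφ.iterate n)]
    rfl
  simp only [h]
  rfl

end D

/-- If `(f_n)` converges uniformly to `φ : X → X` and `p` is a free idempotent ultrafilter
on `ℕ` (`p + p = p`), then `φ^p ∘ f_1^{q+p} = f_1^{q+p}` for every free ultrafilter `q`;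
that is, `f_1^{q+p}(x)` is a fixed point of `φ^p` for every free `q` and every `x ∈ X`. -/
theorem stmt18 {X : Type*} [MetricSpace X] [CompactSpace X]
    (f : ℕ → X → X) (hf : ∀ n, 1 ≤ n → Continuous (f n))
    (φ : X → X) (hconv : TendstoUniformly (fun n x => f n x) φ Filter.atTop)
    (p : Ultrafilter ℕ) (hp : (p : Filter ℕ) ≤ Filter.cofinite)
    (hidem : uAdd p p = p) :
    ∀ q : Ultrafilter ℕ, (q : Filter ℕ) ≤ Filter.cofinite →
      ∀ x : X, pIterMap φ p (pIter f (uAdd q p) x) = pIter f (uAdd q p) x := by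
  have hφ : Continuous φ := by
    apply hconv.continuous
    refine Eventually.frequently ?_
    filter_upwards [eventually_ge_atTop 1] with n hn using hf n hn
  intro q hq x
  have step1 : pIter f (uAdd q p) x = pIterMap φ p (pIter f q x) := by
    show pLim (uAdd q p) (fun k => iterSeq f k x) = _
    rw [pLim_uAdd]
    simp only [shifted_pLim hφ hconv hq]
    rfl
  rw [step1, ← pIterMap_uAdd hφ, hidem]
end
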